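/- For any discrete random variables X, Y, K, A, B (finitely valued) with Y and K determined by (X, A, B), and with (A,B) independent of X, the mutual information satisfies I(X; Y) = H(Y) - H(A,B) + H(A,B | X, Y, K) + H(K | X, Y). -/

import Mathlib

open scoped BigOperators

/-- Probability that the discrete random variable `X` (on a finite sample space with
probability weights `μ`) takes the value `a`. -/
noncomputable def probOf {Ω α : Type*} [Fintype Ω] [DecidableEq α]
    (μ : Ω → ℝ) (X : Ω → α) (a : α) : ℝ :=
  ∑ ω, if X ω = a then μ ω else 0

/-- Shannon entropy (in bits) of the discrete random variable `X`. -/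
noncomputable def entOf {Ω α : Type*} [Fintype Ω] [DecidableEq α]
    (μ : Ω → ℝ) (X : Ω → α) : ℝ :=
  ∑ a ∈ Finset.univ.image X, -(probOf μ X a) * Real.logb 2 (probOf μ X a)

/-- Conditional Shannon entropy `H(A | T)` in bits. -/
noncomputable def condEnt {Ω α β : Type*} [Fintype Ω] [DecidableEq α] [DecidableEq β]
    (μ : Ω → ℝ) (A : Ω → α) (T : Ω → β) : ℝ :=
  entOf μ (fun ω => (A ω, T ω)) - entOf μ T

/-- The binary entropy function (base-2 logarithms). -/
noncomputable def binEnt (p : ℝ) : ℝ := -p * Real.logb 2 p - (1 - p) * Real.logb 2 (1 - p)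

lemma probOf_comp {Ω α β : Type*} [Fintype Ω] [DecidableEq α] [DecidableEq β]
    (μ : Ω → ℝ) (Z : Ω → α) (φ : α → β) (hφ : Function.Injective φ) (a : α) :
    probOf μ (fun ω => φ (Z ω)) (φ a) = probOf μ Z a := by
  unfold probOf
  refine Finset.sum_congr rfl fun ω _ => ?_
  simp [hφ.eq_iff]

lemma entOf_comp {Ω α β : Type*} [Fintype Ω] [DecidableEq α] [DecidableEq β]
    (μ : Ω → ℝ) (Z : Ω → α) (φ : α → β) (hφ : Function.Injective φ) :
    entOf μ (fun ω => φ (Z ω)) = entOf μ Z := by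
  unfold entOf
  have himg : Finset.univ.image (fun ω => φ (Z ω)) = (Finset.univ.image Z).image φ := by
    rw [Finset.image_image]; rfl
  rw [himg, Finset.sum_image (fun a _ b _ h => hφ h)]
  exact Finset.sum_congr rfl fun a _ => by rw [probOf_comp μ Z φ hφ]

lemma entOf_univ {Ω α : Type*} [Fintype Ω] [Fintype α] [DecidableEq α]
    (μ : Ω → ℝ) (Z : Ω → α) :
    entOf μ Z = ∑ a, -(probOf μ Z a) * Real.logb 2 (probOf μ Z a) := by
  unfold entOf
  apply Finset.sum_subset (Finset.subset_univ _)
  intro a _ ha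
  have hz : probOf μ Z a = 0 := by
    unfold probOf
    refine Finset.sum_eq_zero fun ω _ => ?_
    have : Z ω ≠ a := fun h => ha (Finset.mem_image.2 ⟨ω, Finset.mem_univ ω, h⟩)
    simp [this]
  simp [hz]

lemma sum_probOf {Ω α : Type*} [Fintype Ω] [Fintype α] [DecidableEq α]
    (μ : Ω → ℝ) (Z : Ω → α) :
    ∑ a, probOf μ Z a = ∑ ω, μ ω := by
  unfold probOf
  rw [Finset.sum_comm]
  exact Finset.sum_congr rfl fun ω _ => by simp

lemma entOf_pair_indep {Ω α β : Type*} [Fintype Ω] [Fintype α] [Fintype β]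
    [DecidableEq α] [DecidableEq β]
    (μ : Ω → ℝ) (hμ1 : ∑ ω, μ ω = 1) (X : Ω → α) (W : Ω → β)
    (hindep : ∀ x w, probOf μ (fun ω => (X ω, W ω)) (x, w)
      = probOf μ X x * probOf μ W w) :
    entOf μ (fun ω => (X ω, W ω)) = entOf μ X + entOf μ W := by
  have hX : ∑ x, probOf μ X x = 1 := by rw [sum_probOf, hμ1]
  have hW : ∑ w, probOf μ W w = 1 := by rw [sum_probOf, hμ1]
  rw [entOf_univ, entOf_univ, entOf_univ, Fintype.sum_prod_type]
  have key : ∀ x w,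
      -(probOf μ (fun ω => (X ω, W ω)) (x, w))
        * Real.logb 2 (probOf μ (fun ω => (X ω, W ω)) (x, w))
      = probOf μ W w * (-(probOf μ X x) * Real.logb 2 (probOf μ X x))
        + probOf μ X x * (-(probOf μ W w) * Real.logb 2 (probOf μ W w)) := by
    intro x w
    rw [hindep]
    by_cases hp : probOf μ X x = 0
    · simp [hp]
    by_cases hq : probOf μ W w = 0
    · simp [hq]
    rw [Real.logb_mul hp hq]; ring
  calc ∑ x, ∑ w, -(probOf μ (fun ω => (X ω, W ω)) (x, w))
          * Real.logb 2 (probOf μ (fun ω => (X ω, W ω)) (x, w))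
      = ∑ x, ∑ w, (probOf μ W w * (-(probOf μ X x) * Real.logb 2 (probOf μ X x))
          + probOf μ X x * (-(probOf μ W w) * Real.logb 2 (probOf μ W w))) := by
        exact Finset.sum_congr rfl fun x _ => Finset.sum_congr rfl fun w _ => key x w
    _ = ∑ x, ((∑ w, probOf μ W w) * (-(probOf μ X x) * Real.logb 2 (probOf μ X x))
          + probOf μ X x * ∑ w, (-(probOf μ W w) * Real.logb 2 (probOf μ W w))) := by
        refine Finset.sum_congr rfl fun x _ => ?_
        rw [Finset.sum_add_distrib, Finset.sum_mul, Finset.mul_sum]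
    _ = ∑ x, ((-(probOf μ X x) * Real.logb 2 (probOf μ X x))
          + probOf μ X x * ∑ w, (-(probOf μ W w) * Real.logb 2 (probOf μ W w))) := by
        simp [hW]
    _ = (∑ x, -(probOf μ X x) * Real.logb 2 (probOf μ X x))
          + (∑ x, probOf μ X x) * ∑ w, (-(probOf μ W w) * Real.logb 2 (probOf μ W w)) := by
        rw [Finset.sum_add_distrib, Finset.sum_mul]
    _ = _ := by rw [hX]; ring

/-- Key decomposition: if `Y` and `K` are determined by `(X, A, B)` and `(A,B)` is
independent of `X`, then
`I(X;Y) = H(Y) - H(A,B) + H(A,B | X,Y,K) + H(K | X,Y)`,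
where `I(X;Y) = H(X) + H(Y) - H(X,Y)`. -/
theorem mutual_info_decomposition {Ω 𝕏 𝕐 𝕂 𝔸 𝔹 : Type*} [Fintype Ω]
    [Fintype 𝕏] [Fintype 𝕐] [Fintype 𝕂] [Fintype 𝔸] [Fintype 𝔹]
    [DecidableEq 𝕏] [DecidableEq 𝕐] [DecidableEq 𝕂] [DecidableEq 𝔸] [DecidableEq 𝔹]
    (μ : Ω → ℝ) (hμ0 : ∀ ω, 0 ≤ μ ω) (hμ1 : ∑ ω, μ ω = 1)
    (X : Ω → 𝕏) (Y : Ω → 𝕐) (K : Ω → 𝕂) (A : Ω → 𝔸) (B : Ω → 𝔹)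
    (f : 𝕏 × 𝔸 × 𝔹 → 𝕐) (hf : ∀ ω, Y ω = f (X ω, A ω, B ω))
    (g : 𝕏 × 𝔸 × 𝔹 → 𝕂) (hg : ∀ ω, K ω = g (X ω, A ω, B ω))
    (hindep : ∀ (x : 𝕏) (ab : 𝔸 × 𝔹),
      probOf μ (fun ω => (X ω, (A ω, B ω))) (x, ab)
        = probOf μ X x * probOf μ (fun ω => (A ω, B ω)) ab) :
    entOf μ X + entOf μ Y - entOf μ (fun ω => (X ω, Y ω))
      = entOf μ Y - entOf μ (fun ω => (A ω, B ω))
        + condEnt μ (fun ω => (A ω, B ω)) (fun ω => (X ω, Y ω, K ω))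
        + condEnt μ K (fun ω => (X ω, Y ω)) := by
  unfold condEnt
  have hAB : entOf μ (fun ω => (X ω, (A ω, B ω)))
      = entOf μ X + entOf μ (fun ω => (A ω, B ω)) :=
    entOf_pair_indep μ hμ1 X _ (fun x ab => hindep x ab)
  -- H((A,B),(X,Y,K)) = H(X,(A,B))
  have h1 : entOf μ (fun ω => ((A ω, B ω), (X ω, Y ω, K ω)))
      = entOf μ (fun ω => (X ω, (A ω, B ω))) := by
    have hφ : Function.Injective
        (fun p : 𝕏 × 𝔸 × 𝔹 =>
          ((p.2.1, p.2.2), (p.1, f (p.1, p.2.1, p.2.2), g (p.1, p.2.1, p.2.2)))) := by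
      intro p q h
      have h1 := congrArg (fun z : (𝔸 × 𝔹) × 𝕏 × 𝕐 × 𝕂 => z.1) h
      have h2 := congrArg (fun z : (𝔸 × 𝔹) × 𝕏 × 𝕐 × 𝕂 => z.2.1) h
      simp only at h1 h2
      have hp2 : p.2 = q.2 := by
        have a := congrArg Prod.fst h1
        have b := congrArg Prod.snd h1
        exact Prod.ext a b
      exact Prod.ext h2 hp2
    have := entOf_comp μ (fun ω => (X ω, (A ω, B ω)))
      (fun p : 𝕏 × 𝔸 × 𝔹 =>
        ((p.2.1, p.2.2), (p.1, f (p.1, p.2.1, p.2.2), g (p.1, p.2.1, p.2.2)))) hφ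
    rw [← this]
    congr 1
    funext ω
    simp [hf ω, hg ω]
  -- H(K,(X,Y)) = H(X,Y,K)
  have h2 : entOf μ (fun ω => (K ω, (X ω, Y ω)))
      = entOf μ (fun ω => (X ω, Y ω, K ω)) := by
    have hφ : Function.Injective
        (fun p : 𝕏 × 𝕐 × 𝕂 => (p.2.2, (p.1, p.2.1))) := by
      intro p q h
      have h1 := congrArg (fun z : 𝕂 × 𝕏 × 𝕐 => z.1) h
      have h2 := congrArg (fun z : 𝕂 × 𝕏 × 𝕐 => z.2.1) h
      have h3 := congrArg (fun z : 𝕂 × 𝕏 × 𝕐 => z.2.2) h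
      simp only at h1 h2 h3
      exact Prod.ext h2 (Prod.ext h3 h1)
    exact entOf_comp μ (fun ω => (X ω, Y ω, K ω)) _ hφ
  rw [h1, h2, hAB]
  ring
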